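/- Let P be a locally finite poset and k a field of characteristic 0. For f ∈ C^p(P;k) (p ≥ 1) and g_1 ∈ C^{q_1}(P;k), …, g_p ∈ C^{q_p}(P;k) with all q_t ≥ 1, the map Φ intertwines the full operadic compositions: Φ(γ(f; g_1,…,g_p)) = γ(Φf; Φg_1,…,Φg_p), where on simplicial cochains γ(f; g_1,…,g_p)(i_0,…,i_{q_1+⋯+q_p}) = f(i_0, i_{q_1}, i_{q_1+q_2}, …, i_{q_1+⋯+q_p}) · g_1(i_0,…,i_{q_1}) · g_2(i_{q_1},…,i_{q_1+q_2}) ⋯ g_p(i_{q_1+⋯+q_{p−1}},…,i_{q_1+⋯+q_p}), and on multilinear maps γ(F; G_1,…,G_p)(a_1,…,a_{q_1+⋯+q_p}) = F(G_1(a_1,…,a_{q_1}), …, G_p(a_{q_1+⋯+q_{p−1}+1},…,a_{q_1+⋯+q_p})). -/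

import Mathlib

/-!
STATEMENT 9: `Φ` intertwines the full operadic compositions:
`Φ(γ(f; g_1, …, g_p)) = γ(Φf; Φg_1, …, Φg_p)`.
-/

open Finset

section Offsets

/-- The offset `q 0 + q 1 + ⋯ + q (t-1)` (sum of the first `t` arities). -/
def off {p : ℕ} (q : Fin p → ℕ) (t : ℕ) : ℕ :=
  ∑ u ∈ Finset.univ.filter fun u : Fin p => (u : ℕ) < t, q u

lemma off_le {p : ℕ} (q : Fin p → ℕ) (t : ℕ) : off q t ≤ ∑ u, q u :=
  Finset.sum_le_sum_of_subset (Finset.filter_subset _ _)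

lemma off_mono {p : ℕ} (q : Fin p → ℕ) {s t : ℕ} (h : s ≤ t) : off q s ≤ off q t := by
  classical
  refine Finset.sum_le_sum_of_subset fun u hu => ?_
  simp only [Finset.mem_filter, Finset.mem_univ, true_and] at hu ⊢
  omega

lemma off_succ {p : ℕ} (q : Fin p → ℕ) (t : Fin p) :
    off q ((t : ℕ) + 1) = off q (t : ℕ) + q t := by
  classical
  have h : (Finset.univ.filter fun u : Fin p => (u : ℕ) < (t : ℕ) + 1) =
      insert t (Finset.univ.filter fun u : Fin p => (u : ℕ) < (t : ℕ)) := by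
    ext u
    simp only [Finset.mem_filter, Finset.mem_univ, true_and, Finset.mem_insert, Fin.ext_iff]
    omega
  rw [off, h, Finset.sum_insert (by simp), off]
  ring

end Offsets

/-- The Hochschild operadic composition
`γ(F; G_1, …, G_p)(a_1, …, a_{q_1+⋯+q_p}) = F(G_1(a_1, …, a_{q_1}), …)`. -/
def hGamma {A : Type*} (p : ℕ) (q : Fin p → ℕ) (F : (Fin p → A) → A)
    (G : ∀ t, (Fin (q t) → A) → A) : (Fin (∑ t, q t) → A) → A :=
  fun a => F fun t => G t fun s =>
    a ⟨off q t + (s : ℕ), by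
        have h1 := off_succ q t
        have h2 := off_le q ((t : ℕ) + 1)
        omega⟩

section Incidence
variable (k : Type*) [Field k] (P : Type*) [PartialOrder P] [LocallyFiniteOrder P]
  [DecidableEq P]

/-- A chain (simplex) of length `n` in the poset `P`: a monotone `(n+1)`-tuple. -/
abbrev SChain (n : ℕ) := {c : Fin (n + 1) → P // Monotone c}

open scoped Classical in
/-- The finset of monotone `(n+1)`-tuples from `x` to `y`. -/
noncomputable def chainTuples (n : ℕ) (x y : P) : Finset (Fin (n + 1) → P) :=
  (Fintype.piFinset fun _ => Finset.Icc x y).filter fun c =>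
    Monotone c ∧ c 0 = x ∧ c (Fin.last n) = y

lemma chainTuples_mono {n : ℕ} {x y : P} {c : Fin (n + 1) → P}
    (hc : c ∈ chainTuples P n x y) : Monotone c := by
  classical
  simp only [chainTuples, Finset.mem_filter] at hc
  exact hc.2.1

lemma le_of_mem_chainTuples {n : ℕ} {x y : P} {c : Fin (n + 1) → P}
    (hc : c ∈ chainTuples P n x y) : x ≤ y := by
  classical
  simp only [chainTuples, Finset.mem_filter] at hc
  exact hc.2.2.1 ▸ hc.2.2.2 ▸ hc.2.1 (Fin.zero_le _)

/-- The map `Φ` from simplicial `n`-cochains on `P` to Hochschild `n`-cochains of `kP`: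
`(Φf)(a_1, …, a_n)(x, y) = ∑_{x = i₀ ≤ ⋯ ≤ iₙ = y} f(i₀, …, iₙ)·a_1(i₀,i₁)⋯aₙ(i_{n-1},iₙ)`. -/
noncomputable def Phi (n : ℕ) (f : SChain P n → k) (a : Fin n → IncidenceAlgebra k P) :
    IncidenceAlgebra k P :=
  ⟨fun x y => ∑ c ∈ (chainTuples P n x y).attach,
      f ⟨c.1, chainTuples_mono P c.2⟩ * ∏ t : Fin n, a t (c.1 t.castSucc) (c.1 t.succ),
   fun x y hxy => by
    exact Finset.sum_eq_zero fun c _ => absurd (le_of_mem_chainTuples P c.2) hxy⟩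

end Incidence

section Simplicial
variable (k : Type*) [Field k] (P : Type*) [PartialOrder P]

/-- The simplicial operadic composition
`γ(f; g_1, …, g_p)(i_0, …, i_N) = f(i_0, i_{q_1}, i_{q_1+q_2}, …, i_N) ⬝ ∏_t g_t(…)`. -/
def sGamma (p : ℕ) (q : Fin p → ℕ) (f : SChain P p → k) (g : ∀ t, SChain P (q t) → k) :
    SChain P (∑ t, q t) → k :=
  fun c =>
    f ⟨fun t => c.1 ⟨off q t, by have := off_le q (t : ℕ); omega⟩,
       c.2.comp (by
         intro s t hst
         have hst' : (s : ℕ) ≤ (t : ℕ) := hst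
         simp only [Fin.mk_le_mk]
         exact off_mono q hst')⟩ *
    ∏ t : Fin p,
      g t ⟨fun s => c.1 ⟨off q t + (s : ℕ), by
              have h1 := off_succ q t
              have h2 := off_le q ((t : ℕ) + 1)
              omega⟩,
            c.2.comp (by
              intro s s' hss'
              have hss'' : (s : ℕ) ≤ (s' : ℕ) := hss'
              simp only [Fin.mk_le_mk]
              omega)⟩

end Simplicial

section AuxOffsets

variable {p : ℕ}

lemma off_zero (q : Fin p → ℕ) : off q 0 = 0 := by
  simp [off]

lemma off_top (q : Fin p → ℕ) : off q p = ∑ u, q u := by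
  rw [off]
  congr 1
  exact Finset.filter_true_of_mem fun u _ => u.isLt

lemma exists_off_decomp (q : Fin p → ℕ) {v : ℕ} (hv : v < ∑ u, q u) :
    ∃ t : Fin p, off q t ≤ v ∧ v < off q ((t : ℕ) + 1) := by
  classical
  have hp : 0 < p := by
    rcases Nat.eq_zero_or_pos p with h | h
    · subst h; simp at hv
    · exact h
  set S : Finset (Fin p) := Finset.univ.filter fun t => off q t ≤ v with hS
  have h0 : (⟨0, hp⟩ : Fin p) ∈ S := by
    simp only [hS, Finset.mem_filter, Finset.mem_univ, true_and]
    have h00 : off q 0 = 0 := off_zero q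
    have h01 : off q ((⟨0, hp⟩ : Fin p) : ℕ) = 0 := off_zero q
    omega
  have hne : S.Nonempty := ⟨_, h0⟩
  refine ⟨S.max' hne, ?_, ?_⟩
  · have := S.max'_mem hne
    simp only [hS, Finset.mem_filter] at this
    exact this.2
  · by_cases h1 : ((S.max' hne : Fin p) : ℕ) + 1 = p
    · rw [h1, off_top]; exact hv
    · have hlt : ((S.max' hne : Fin p) : ℕ) + 1 < p := by
        have := (S.max' hne).isLt; omega
      by_contra hcon
      push_neg at hcon
      have hmem : (⟨(S.max' hne : ℕ) + 1, hlt⟩ : Fin p) ∈ S := by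
        simp only [hS, Finset.mem_filter, Finset.mem_univ, true_and]
        exact hcon
      have := S.le_max' _ hmem
      simp only [Fin.le_def] at this
      omega

lemma off_decomp_unique (q : Fin p → ℕ) {v : ℕ} {t t' : Fin p}
    (h1 : off q t ≤ v) (h2 : v < off q ((t : ℕ) + 1))
    (h1' : off q t' ≤ v) (h2' : v < off q ((t' : ℕ) + 1)) : t = t' := by
  rcases Nat.lt_trichotomy (t : ℕ) (t' : ℕ) with h | h | h
  · exfalso
    have := off_mono q (show (t : ℕ) + 1 ≤ (t' : ℕ) from h)
    omega
  · exact Fin.ext h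
  · exfalso
    have := off_mono q (show (t' : ℕ) + 1 ≤ (t : ℕ) from h)
    omega

lemma off_add_lt (q : Fin p → ℕ) (t : Fin p) {s : ℕ} (hs : s < q t) :
    off q t + s < ∑ u, q u := by
  have h1 := off_succ q t
  have h2 := off_le q ((t : ℕ) + 1)
  omega

lemma prod_off_reindex {M : Type*} [CommMonoid M] (q : Fin p → ℕ)
    (A : Fin (∑ t, q t) → M) :
    ∏ u, A u = ∏ t : Fin p, ∏ s : Fin (q t), A ⟨off q t + s, off_add_lt q t s.isLt⟩ := by
  classical
  have hbij : Function.Bijective (fun x : Σ t : Fin p, Fin (q t) =>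
      (⟨off q x.1 + x.2, off_add_lt q x.1 x.2.isLt⟩ : Fin (∑ t, q t))) := by
    constructor
    · rintro ⟨t, s⟩ ⟨t', s'⟩ h
      simp only [Fin.mk.injEq] at h
      have ht : t = t' := by
        refine off_decomp_unique q (v := off q t + (s : ℕ)) (by omega) ?_ (by omega) ?_
        · have := off_succ q t; have := s.isLt; omega
        · have := off_succ q t'; have := s'.isLt; omega
      subst ht
      have : (s : ℕ) = (s' : ℕ) := by omega
      simp [Fin.ext this]
    · intro u
      obtain ⟨t, h1, h2⟩ := exists_off_decomp q u.isLt
      have := off_succ q t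
      refine ⟨⟨t, ⟨(u : ℕ) - off q t, by omega⟩⟩, ?_⟩
      apply Fin.ext
      simp only
      omega
  rw [← Fintype.prod_bijective _ hbij
      (fun x : Σ t : Fin p, Fin (q t) => A ⟨off q x.1 + x.2, off_add_lt q x.1 x.2.isLt⟩)
      A (fun x => rfl)]
  rw [← Finset.univ_sigma_univ, Finset.prod_sigma]

end AuxOffsets

section AuxChains

variable {k : Type*} [Field k] {P : Type*} [PartialOrder P] [LocallyFiniteOrder P]
  [DecidableEq P]

lemma mem_chainTuples_of {n : ℕ} {x y : P} {c : Fin (n + 1) → P}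
    (hm : Monotone c) (h0 : c 0 = x) (hl : c (Fin.last n) = y) :
    c ∈ chainTuples P n x y := by
  classical
  simp only [chainTuples, Finset.mem_filter, Fintype.mem_piFinset]
  refine ⟨fun i => ?_, hm, h0, hl⟩
  simp only [Finset.mem_Icc]
  exact ⟨h0 ▸ hm (Fin.zero_le i), hl ▸ hm (Fin.le_last i)⟩

lemma chainTuples_zero {n : ℕ} {x y : P} {c : Fin (n + 1) → P}
    (hc : c ∈ chainTuples P n x y) : c 0 = x := by
  classical
  simp only [chainTuples, Finset.mem_filter] at hc
  exact hc.2.2.1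

lemma chainTuples_last {n : ℕ} {x y : P} {c : Fin (n + 1) → P}
    (hc : c ∈ chainTuples P n x y) : c (Fin.last n) = y := by
  classical
  simp only [chainTuples, Finset.mem_filter] at hc
  exact hc.2.2.2

open scoped Classical in
/-- `f` extended to all tuples, vanishing on non-monotone ones. -/
noncomputable def fm {n : ℕ} (f : SChain P n → k) (c : Fin (n + 1) → P) : k :=
  if h : Monotone c then f ⟨c, h⟩ else 0

lemma fm_eq {n : ℕ} (f : SChain P n → k) {c : Fin (n + 1) → P} (h : Monotone c) :
    fm f c = f ⟨c, h⟩ := by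
  rw [fm, dif_pos h]

lemma Phi_apply (n : ℕ) (f : SChain P n → k) (a : Fin n → IncidenceAlgebra k P) (x y : P) :
    Phi k P n f a x y = ∑ c ∈ chainTuples P n x y,
      fm f c * ∏ t : Fin n, a t (c t.castSucc) (c t.succ) := by
  show ∑ c ∈ (chainTuples P n x y).attach,
      f ⟨c.1, chainTuples_mono P c.2⟩ * ∏ t : Fin n, a t (c.1 t.castSucc) (c.1 t.succ) = _
  rw [← Finset.sum_attach (chainTuples P n x y)
      (fun c => fm f c * ∏ t : Fin n, a t (c t.castSucc) (c t.succ))]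
  exact Finset.sum_congr rfl fun c _ => by rw [fm_eq f (chainTuples_mono P c.2)]

end AuxChains

section AuxMerge

variable {P : Type*} [PartialOrder P] {p : ℕ} {q : Fin p → ℕ}

/-- Merge a chain `d` of length `p` with chains `γ t` of lengths `q t` into a chain
of length `∑ t, q t`. -/
noncomputable def mergeTuple (q : Fin p → ℕ) (d : Fin (p + 1) → P)
    (γ : ∀ t : Fin p, Fin (q t + 1) → P) (u : Fin ((∑ t, q t) + 1)) : P :=
  if h : (u : ℕ) < ∑ t, q t then
    γ (exists_off_decomp q h).choose
      ⟨(u : ℕ) - off q (exists_off_decomp q h).choose, by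
        have hspec := (exists_off_decomp q h).choose_spec
        have := off_succ q (exists_off_decomp q h).choose
        omega⟩
  else d (Fin.last p)

variable {d : Fin (p + 1) → P} {γ : ∀ t : Fin p, Fin (q t + 1) → P}

lemma mergeTuple_apply_top {v : Fin ((∑ t, q t) + 1)} (hv : (v : ℕ) = ∑ t, q t) :
    mergeTuple q d γ v = d (Fin.last p) := by
  rw [mergeTuple, dif_neg (by omega)]

lemma gamma_congr {γ : ∀ t : Fin p, Fin (q t + 1) → P} {t₀ t₁ : Fin p} (h : t₀ = t₁)
    {a b : ℕ} (hab : a = b) (ha : a < q t₀ + 1) (hb : b < q t₁ + 1) :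
    γ t₀ ⟨a, ha⟩ = γ t₁ ⟨b, hb⟩ := by
  subst h; subst hab; rfl

lemma off_succ' (q : Fin p → ℕ) (t : ℕ) (ht : t < p) :
    off q (t + 1) = off q t + q ⟨t, ht⟩ :=
  off_succ q ⟨t, ht⟩

lemma mergeTuple_apply (hq : ∀ t, 1 ≤ q t)
    (hcompat : ∀ t : Fin p, γ t 0 = d t.castSucc ∧ γ t (Fin.last (q t)) = d t.succ)
    (t : Fin p) (s : ℕ) (hs : s ≤ q t)
    (v : Fin ((∑ u, q u) + 1)) (hv : (v : ℕ) = off q t + s) :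
    mergeTuple q d γ v = γ t ⟨s, by omega⟩ := by
  have hsucc : off q ((t : ℕ) + 1) = off q (t : ℕ) + q t := off_succ' q t t.isLt
  have hle := off_le q ((t : ℕ) + 1)
  by_cases h : (v : ℕ) < ∑ u, q u
  · rw [mergeTuple, dif_pos h]
    have hspec := (exists_off_decomp q h).choose_spec
    rcases Nat.lt_or_ge s (q t) with hslt | hsge
    · -- s < q t, so the chosen index is t
      have ht : (exists_off_decomp q h).choose = t :=
        off_decomp_unique q hspec.1 hspec.2 (by omega) (by omega)
      have hoff : off q ((exists_off_decomp q h).choose : ℕ) = off q (t : ℕ) := by rw [ht]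
      exact gamma_congr ht (by omega) _ _
    · -- s = q t
      have hseq : s = q t := by omega
      subst hseq
      have ht1 : (t : ℕ) + 1 < p := by
        by_contra h'
        have htp : (t : ℕ) + 1 = p := by have := t.isLt; omega
        rw [htp, off_top] at hsucc
        omega
      have h2 : off q ((t : ℕ) + 1 + 1) = off q ((t : ℕ) + 1) + q ⟨(t : ℕ) + 1, ht1⟩ :=
        off_succ' q ((t : ℕ) + 1) ht1
      have h3 := hq (⟨(t : ℕ) + 1, ht1⟩ : Fin p)
      have ht : (exists_off_decomp q h).choose = ⟨(t : ℕ) + 1, ht1⟩ := by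
        refine off_decomp_unique q hspec.1 hspec.2 ?_ ?_
        · show off q ((t : ℕ) + 1) ≤ (v : ℕ)
          omega
        · show (v : ℕ) < off q ((t : ℕ) + 1 + 1)
          omega
      have hoff : off q ((exists_off_decomp q h).choose : ℕ) = off q ((t : ℕ) + 1) := by
        rw [ht]
      have hlast : γ t ⟨q t, by omega⟩ = γ t (Fin.last (q t)) := rfl
      have hd : d t.succ = d (⟨(t : ℕ) + 1, ht1⟩ : Fin p).castSucc :=
        congrArg d (Fin.ext (by simp))
      rw [hlast, (hcompat t).2, hd, ← (hcompat (⟨(t : ℕ) + 1, ht1⟩ : Fin p)).1]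
      have hz : (0 : Fin (q (⟨(t : ℕ) + 1, ht1⟩ : Fin p) + 1)) = ⟨0, Nat.succ_pos _⟩ := rfl
      rw [hz]
      exact gamma_congr ht (by omega) _ _
  · -- v = ∑, so s = q t and t + 1 = p
    have hv' : (v : ℕ) = ∑ u, q u := by have := v.isLt; omega
    rw [mergeTuple_apply_top hv']
    have hseq : s = q t := by omega
    subst hseq
    have htp : (t : ℕ) + 1 = p := by
      by_contra h'
      have ht1 : (t : ℕ) + 1 < p := by have := t.isLt; omega
      have h2 : off q ((t : ℕ) + 1 + 1) = off q ((t : ℕ) + 1) + q ⟨(t : ℕ) + 1, ht1⟩ :=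
        off_succ' q ((t : ℕ) + 1) ht1
      have h3 := hq (⟨(t : ℕ) + 1, ht1⟩ : Fin p)
      have h4 := off_le q ((t : ℕ) + 1 + 1)
      omega
    have hlast : γ t ⟨q t, by omega⟩ = γ t (Fin.last (q t)) := rfl
    rw [hlast, (hcompat t).2]
    exact congrArg d (Fin.ext (by simp [Fin.val_last, htp])).symm

end AuxMerge

section AuxSplit

variable {k : Type*} [Field k] {P : Type*} [PartialOrder P] [LocallyFiniteOrder P]
  [DecidableEq P] {p : ℕ} {q : Fin p → ℕ} {x y : P}

/-- Coarse chain extracted from a long chain. -/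
def dOf (q : Fin p → ℕ) (c : Fin ((∑ t, q t) + 1) → P) : Fin (p + 1) → P :=
  fun t => c ⟨off q t, by have := off_le q (t : ℕ); omega⟩

/-- Fine chains extracted from a long chain. -/
def gOf (q : Fin p → ℕ) (c : Fin ((∑ t, q t) + 1) → P) (t : Fin p) : Fin (q t + 1) → P :=
  fun s => c ⟨off q t + s, by
    have h1 := off_succ q t
    have h2 := off_le q ((t : ℕ) + 1)
    have := s.isLt
    omega⟩

lemma dOf_mem {c : Fin ((∑ t, q t) + 1) → P} (hc : c ∈ chainTuples P (∑ t, q t) x y) :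
    dOf q c ∈ chainTuples P p x y := by
  have hm := chainTuples_mono P hc
  refine mem_chainTuples_of (fun s t hst => hm (by
      simp only [Fin.mk_le_mk]
      exact off_mono q hst)) ?_ ?_
  · have h1 : dOf q c 0 = c 0 := congrArg c (Fin.ext (by simp [off_zero]))
    rw [h1]
    exact chainTuples_zero hc
  · have h1 : dOf q c (Fin.last p) = c (Fin.last (∑ t, q t)) :=
      congrArg c (Fin.ext (by simp [off_top]))
    rw [h1]
    exact chainTuples_last hc

lemma gOf_mem {c : Fin ((∑ t, q t) + 1) → P} (hc : c ∈ chainTuples P (∑ t, q t) x y)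
    (t : Fin p) :
    gOf q c t ∈ chainTuples P (q t) (dOf q c t.castSucc) (dOf q c t.succ) := by
  have hm := chainTuples_mono P hc
  refine mem_chainTuples_of (fun s s' hss' => hm (by
      simp only [Fin.mk_le_mk]
      have : (s : ℕ) ≤ (s' : ℕ) := hss'
      omega)) ?_ ?_
  · exact congrArg c (Fin.ext (by simp))
  · exact congrArg c (Fin.ext (by simp [Fin.val_succ, off_succ]))

lemma merge_mem (hp : 1 ≤ p) (hq : ∀ t, 1 ≤ q t) {d : Fin (p + 1) → P}
    {γ : ∀ t : Fin p, Fin (q t + 1) → P}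
    (hd : d ∈ chainTuples P p x y)
    (hγ : ∀ t, γ t ∈ chainTuples P (q t) (d t.castSucc) (d t.succ)) :
    mergeTuple q d γ ∈ chainTuples P (∑ t, q t) x y := by
  have hcompat : ∀ t : Fin p, γ t 0 = d t.castSucc ∧ γ t (Fin.last (q t)) = d t.succ :=
    fun t => ⟨chainTuples_zero (hγ t), chainTuples_last (hγ t)⟩
  refine mem_chainTuples_of ?_ ?_ ?_
  · rw [Fin.monotone_iff_le_succ]
    intro u
    obtain ⟨t, h1, h2⟩ := exists_off_decomp q u.isLt
    have hsucc := off_succ q t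
    rw [mergeTuple_apply hq hcompat t ((u : ℕ) - off q t) (by omega) u.castSucc
        (by simp only [Fin.coe_castSucc]; omega)]
    rw [mergeTuple_apply hq hcompat t ((u : ℕ) - off q t + 1) (by omega) u.succ
        (by simp only [Fin.val_succ]; omega)]
    exact chainTuples_mono P (hγ t) (by simp only [Fin.mk_le_mk]; omega)
  · have h00 : off q ((⟨0, hp⟩ : Fin p) : ℕ) = 0 := off_zero q
    rw [mergeTuple_apply hq hcompat ⟨0, hp⟩ 0 (Nat.zero_le _) 0 (by simp [h00])]
    have h1 : (⟨0, by omega⟩ : Fin (q ⟨0, hp⟩ + 1)) = 0 := Fin.ext (by simp)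
    rw [h1, chainTuples_zero (hγ ⟨0, hp⟩)]
    have h2 : (⟨0, hp⟩ : Fin p).castSucc = 0 := Fin.ext (by simp)
    rw [h2]
    exact chainTuples_zero hd
  · rw [mergeTuple_apply_top (by simp [Fin.val_last])]
    exact chainTuples_last hd

lemma dOf_merge (hq : ∀ t, 1 ≤ q t) {d : Fin (p + 1) → P}
    {γ : ∀ t : Fin p, Fin (q t + 1) → P}
    (hcompat : ∀ t : Fin p, γ t 0 = d t.castSucc ∧ γ t (Fin.last (q t)) = d t.succ) :
    dOf q (mergeTuple q d γ) = d := by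
  funext t
  by_cases ht : (t : ℕ) < p
  · have := mergeTuple_apply hq hcompat ⟨(t : ℕ), ht⟩ 0 (Nat.zero_le _)
      ⟨off q (t : ℕ), by have := off_le q (t : ℕ); omega⟩ (by simp)
    rw [dOf, this]
    have h1 : (⟨0, by omega⟩ : Fin (q ⟨(t : ℕ), ht⟩ + 1)) = 0 := Fin.ext (by simp)
    rw [h1, (hcompat ⟨(t : ℕ), ht⟩).1]
    exact congrArg d (Fin.ext (by simp))
  · have htp : (t : ℕ) = p := by have := t.isLt; omega
    have := mergeTuple_apply_top (d := d) (γ := γ)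
      (v := (⟨off q (t : ℕ), by have := off_le q (t : ℕ); omega⟩ : Fin ((∑ u, q u) + 1)))
      (by simp [htp, off_top])
    rw [dOf, this]
    exact congrArg d (Fin.ext (by simp [Fin.val_last, htp]))

lemma gOf_merge (hq : ∀ t, 1 ≤ q t) {d : Fin (p + 1) → P}
    {γ : ∀ t : Fin p, Fin (q t + 1) → P}
    (hcompat : ∀ t : Fin p, γ t 0 = d t.castSucc ∧ γ t (Fin.last (q t)) = d t.succ) :
    gOf q (mergeTuple q d γ) = γ := by
  funext t s
  have := mergeTuple_apply hq hcompat t (s : ℕ) (by have := s.isLt; omega)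
    ⟨off q t + s, by
      have h1 := off_succ q t
      have h2 := off_le q ((t : ℕ) + 1)
      have := s.isLt
      omega⟩ (by simp)
  rw [gOf, this]

lemma merge_split (hq : ∀ t, 1 ≤ q t) {c : Fin ((∑ t, q t) + 1) → P}
    (hc : c ∈ chainTuples P (∑ t, q t) x y) :
    mergeTuple q (dOf q c) (gOf q c) = c := by
  have hcompat : ∀ t : Fin p, gOf q c t 0 = dOf q c t.castSucc ∧
      gOf q c t (Fin.last (q t)) = dOf q c t.succ :=
    fun t => ⟨chainTuples_zero (gOf_mem hc t), chainTuples_last (gOf_mem hc t)⟩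
  funext v
  by_cases h : (v : ℕ) < ∑ u, q u
  · obtain ⟨t, h1, h2⟩ := exists_off_decomp q h
    have hsucc := off_succ q t
    rw [mergeTuple_apply hq hcompat t ((v : ℕ) - off q t) (by omega) v (by omega)]
    rw [gOf]
    exact congrArg c (Fin.ext (by simp only; omega))
  · have hv : (v : ℕ) = ∑ u, q u := by have := v.isLt; omega
    rw [mergeTuple_apply_top hv]
    rw [dOf]
    exact congrArg c (Fin.ext (by simp [Fin.val_last, off_top, hv]))

end AuxSplit

theorem phi_intertwines_gamma
    (k : Type*) [Field k] [CharZero k]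
    (P : Type*) [PartialOrder P] [LocallyFiniteOrder P] [DecidableEq P]
    (p : ℕ) (hp : 1 ≤ p) (q : Fin p → ℕ) (hq : ∀ t, 1 ≤ q t)
    (f : SChain P p → k) (g : ∀ t, SChain P (q t) → k) :
    Phi k P (∑ t, q t) (sGamma k P p q f g) =
      hGamma p q (Phi k P p f) (fun t => Phi k P (q t) (g t)) := by
  classical
  funext a
  refine IncidenceAlgebra.ext fun x y _ => ?_
  simp only [hGamma]
  simp only [Phi_apply]
  simp only [Finset.prod_univ_sum, Finset.mul_sum]
  rw [Finset.sum_sigma']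
  refine Finset.sum_nbij' (fun c => ⟨dOf q c, gOf q c⟩)
    (fun z => mergeTuple q z.1 z.2) ?_ ?_ ?_ ?_ ?_
  · intro c hc
    exact Finset.mem_sigma.mpr ⟨dOf_mem hc, Fintype.mem_piFinset.mpr fun t => gOf_mem hc t⟩
  · intro z hz
    have hz' := Finset.mem_sigma.mp hz
    exact merge_mem hp hq hz'.1 (fun t => Fintype.mem_piFinset.mp hz'.2 t)
  · intro c hc
    exact merge_split hq hc
  · rintro ⟨d, γ⟩ hz
    have hz' := Finset.mem_sigma.mp hz
    have hγ : ∀ t, γ t ∈ chainTuples P (q t) (d t.castSucc) (d t.succ) :=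
      fun t => Fintype.mem_piFinset.mp hz'.2 t
    have hcompat : ∀ t : Fin p, γ t 0 = d t.castSucc ∧ γ t (Fin.last (q t)) = d t.succ :=
      fun t => ⟨chainTuples_zero (hγ t), chainTuples_last (hγ t)⟩
    have h1 := dOf_merge hq hcompat
    have h2 := gOf_merge hq hcompat
    exact Sigma.ext h1 (heq_of_eq h2)
  · intro c hc
    have hm := chainTuples_mono P hc
    have hdm := chainTuples_mono P (dOf_mem hc)
    rw [fm_eq _ hm]
    have hs : sGamma k P p q f g ⟨c, hm⟩ = f ⟨dOf q c, hdm⟩ *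
        ∏ t, g t ⟨gOf q c t, chainTuples_mono P (gOf_mem hc t)⟩ := rfl
    rw [hs]
    rw [fm_eq f hdm]
    have hg : ∀ t, fm (g t) (gOf q c t) =
        g t ⟨gOf q c t, chainTuples_mono P (gOf_mem hc t)⟩ :=
      fun t => fm_eq _ _
    simp only [hg]
    rw [Finset.prod_mul_distrib]
    have hprod : ∏ u, a u (c u.castSucc) (c u.succ) =
        ∏ t, ∏ s : Fin (q t), a ⟨off q t + (s : ℕ), off_add_lt q t s.isLt⟩
          (gOf q c t s.castSucc) (gOf q c t s.succ) := by
      rw [prod_off_reindex q (fun u => a u (c u.castSucc) (c u.succ))]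
      refine Finset.prod_congr rfl fun t _ => Finset.prod_congr rfl fun s _ => ?_
      exact congrArg₂ (a _)
        (congrArg c (Fin.ext (by simp)))
        (congrArg c (Fin.ext (by simp only [Fin.val_succ, Fin.coe_castSucc]; omega)))
    rw [hprod]
    ring
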